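/- Let s ↦ B(s) be a strongly continuous, uniformly bounded map from [0,t] into bounded operators on a Hilbert space H₁, whose integrals ∫₀^r B(s)ds lie in a C*-algebra B₁ ⊆ B(H₁) for all r ∈ [0,t]. Let s ↦ λ(s) be a norm-continuous map into bounded linear maps B(H₁) → B(H₂) such that each λ(s) is weak-operator (normal) continuous on bounded sets and λ(s)(B₁) ⊆ B₂ for a C*-algebra B₂ ⊆ B(H₂). Then ∫₀^t λ(s)(B(s)) ds (strong operator integral) lies in B₂, and is the norm limit as m → ∞ of the Riemann-type sums Σ_{l=1}^m λ(lt/m)(∫_{(l−1)t/m}^{lt/m} B(s) ds). -/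

import Mathlib

open ContinuousLinearMap Filter MeasureTheory intervalIntegral

lemma aux_cont {H₁ H₂ : Type*}
    [NormedAddCommGroup H₁] [InnerProductSpace ℂ H₁] [CompleteSpace H₁]
    [NormedAddCommGroup H₂] [InnerProductSpace ℂ H₂] [CompleteSpace H₂]
    (B : ℝ → H₁ →L[ℂ] H₁)
    (hBcont : ∀ x : H₁, Continuous fun s : ℝ => B s x)
    (Cb : ℝ) (hBbdd : ∀ s : ℝ, ‖B s‖ ≤ Cb)
    (lam : (H₁ →L[ℂ] H₁) →L[ℂ] (H₂ →L[ℂ] H₂))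
    (hlamnormal : ∀ (Cbd : ℝ) (b : ℕ → H₁ →L[ℂ] H₁) (blim : H₁ →L[ℂ] H₁),
      (∀ k, ‖b k‖ ≤ Cbd) →
      (∀ x : H₁, Tendsto (fun k => b k x) atTop (nhds (blim x))) →
      ∀ y : H₂, Tendsto (fun k => (lam (b k)) y) atTop (nhds ((lam blim) y)))
    (y : H₂) : Continuous fun s : ℝ => lam (B s) y := by
  rw [continuous_iff_continuousAt]
  intro s
  rw [ContinuousAt, tendsto_iff_seq_tendsto]
  intro u hu
  exact hlamnormal Cb (fun k => B (u k)) (B s) (fun k => hBbdd _)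
    (fun x => ((hBcont x).tendsto s).comp hu) y

lemma aux_swap {H₁ H₂ : Type*}
    [NormedAddCommGroup H₁] [InnerProductSpace ℂ H₁] [CompleteSpace H₁]
    [NormedAddCommGroup H₂] [InnerProductSpace ℂ H₂] [CompleteSpace H₂]
    (B : ℝ → H₁ →L[ℂ] H₁)
    (hBcont : ∀ x : H₁, Continuous fun s : ℝ => B s x)
    (Cb : ℝ) (hBbdd : ∀ s : ℝ, ‖B s‖ ≤ Cb)
    (Iop : ℝ → ℝ → (H₁ →L[ℂ] H₁))
    (hIop : ∀ (r r' : ℝ) (x : H₁), Iop r r' x = ∫ s in r..r', B s x)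
    (lam : (H₁ →L[ℂ] H₁) →L[ℂ] (H₂ →L[ℂ] H₂))
    (hlamnormal : ∀ (Cbd : ℝ) (b : ℕ → H₁ →L[ℂ] H₁) (blim : H₁ →L[ℂ] H₁),
      (∀ k, ‖b k‖ ≤ Cbd) →
      (∀ x : H₁, Tendsto (fun k => b k x) atTop (nhds (blim x))) →
      ∀ y : H₂, Tendsto (fun k => (lam (b k)) y) atTop (nhds ((lam blim) y)))
    (a b : ℝ) (y : H₂) :
    lam (Iop a b) y = ∫ s in a..b, lam (B s) y := by
  have hCb0 : (0:ℝ) ≤ Cb := le_trans (norm_nonneg _) (hBbdd 0)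
  have hInt : ∀ (x : H₁) (u v : ℝ), IntervalIntegrable (fun s => B s x) volume u v :=
    fun x u v => (hBcont x).intervalIntegrable u v
  have hadd : ∀ u v w : ℝ, Iop u w = Iop u v + Iop v w := by
    intro u v w
    ext x
    rw [ContinuousLinearMap.add_apply, hIop, hIop, hIop,
      integral_add_adjacent_intervals (hInt x u v) (hInt x v w)]
  have hIopnorm : ∀ (u v : ℝ) (x : H₁), ‖Iop u v x‖ ≤ Cb * ‖x‖ * |v - u| := by
    intro u v x
    rw [hIop]
    refine norm_integral_le_of_norm_le_const (fun s _ => ?_)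
    calc ‖B s x‖ ≤ ‖B s‖ * ‖x‖ := le_opNorm _ _
      _ ≤ Cb * ‖x‖ := mul_le_mul_of_nonneg_right (hBbdd s) (norm_nonneg x)
  have hBly : Continuous fun s : ℝ => lam (B s) y :=
    aux_cont B hBcont Cb hBbdd lam hlamnormal y
  have hg : ∀ r : ℝ, HasDerivAt (fun v => ∫ s in a..v, lam (B s) y) (lam (B r) y) r :=
    fun r => integral_hasDerivAt_right (hBly.intervalIntegrable a r)
      (hBly.stronglyMeasurableAtFilter volume (nhds r)) hBly.continuousAt
  have hf : ∀ r : ℝ, HasDerivAt (fun v => lam (Iop a v) y) (lam (B r) y) r := by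
    intro r
    rw [hasDerivAt_iff_tendsto_slope]
    have hslope : slope (fun v => lam (Iop a v) y) r
        = fun v => lam ((v - r)⁻¹ • Iop r v) y := by
      funext v
      have h1 : Iop a v - Iop a r = Iop r v := by rw [hadd a r v]; abel
      rw [lam.map_smul_of_tower, ContinuousLinearMap.smul_apply, slope_def_module,
        ← ContinuousLinearMap.sub_apply, ← map_sub, h1]
    rw [hslope, tendsto_iff_seq_tendsto]
    intro u hu
    have hb : ∀ k, ‖(u k - r)⁻¹ • Iop r (u k)‖ ≤ Cb := by
      intro k
      refine opNorm_le_bound _ hCb0 (fun x => ?_)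
      rw [ContinuousLinearMap.smul_apply, norm_smul, norm_inv, Real.norm_eq_abs]
      rcases eq_or_ne (u k) r with h | h
      · have h0 : Iop r (u k) x = 0 := by rw [h, hIop, integral_same]
        rw [h0, norm_zero, mul_zero]
        positivity
      · have h2 := hIopnorm r (u k) x
        have h3 : (0:ℝ) < |u k - r| := abs_pos.mpr (sub_ne_zero.mpr h)
        calc |u k - r|⁻¹ * ‖Iop r (u k) x‖
            ≤ |u k - r|⁻¹ * (Cb * ‖x‖ * |u k - r|) := by
              exact mul_le_mul_of_nonneg_left h2 (inv_nonneg.mpr (abs_nonneg _))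
          _ = Cb * ‖x‖ := by field_simp
    have hstrong : ∀ x : H₁,
        Tendsto (fun k => ((u k - r)⁻¹ • Iop r (u k)) x) atTop (nhds (B r x)) := by
      intro x
      have hG : HasDerivAt (fun v => ∫ s in r..v, B s x) (B r x) r :=
        integral_hasDerivAt_right (hInt x r r)
          ((hBcont x).stronglyMeasurableAtFilter volume (nhds r)) (hBcont x).continuousAt
      rw [hasDerivAt_iff_tendsto_slope] at hG
      have h4 := hG.comp hu
      have h5 : (slope (fun v => ∫ s in r..v, B s x) r) ∘ u
          = fun k => ((u k - r)⁻¹ • Iop r (u k)) x := by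
        funext k
        simp only [Function.comp_apply, slope_def_module, ContinuousLinearMap.smul_apply,
          hIop, integral_same, sub_zero]
      rwa [h5] at h4
    exact hlamnormal Cb _ (B r) hb hstrong y
  have hφ : ∀ r : ℝ, HasDerivAt
      (fun v => lam (Iop a v) y - ∫ s in a..v, lam (B s) y) 0 r := by
    intro r
    have h := (hf r).sub (hg r)
    rw [sub_self] at h
    exact h
  have hconst := is_const_of_deriv_eq_zero (𝕜 := ℝ)
    (fun r => (hφ r).differentiableAt) (fun r => (hφ r).deriv) b a
  have ha : Iop a a = 0 := by ext x; simp [hIop]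
  rw [ha, integral_same, map_zero, ContinuousLinearMap.zero_apply, sub_zero, sub_eq_zero]
    at hconst
  exact hconst

lemma aux_cont2 {H₁ H₂ : Type*}
    [NormedAddCommGroup H₁] [InnerProductSpace ℂ H₁] [CompleteSpace H₁]
    [NormedAddCommGroup H₂] [InnerProductSpace ℂ H₂] [CompleteSpace H₂]
    (B : ℝ → H₁ →L[ℂ] H₁)
    (hBcont : ∀ x : H₁, Continuous fun s : ℝ => B s x)
    (Cb : ℝ) (hBbdd : ∀ s : ℝ, ‖B s‖ ≤ Cb)
    (lam : ℝ → (H₁ →L[ℂ] H₁) →L[ℂ] (H₂ →L[ℂ] H₂))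
    (hlamcont : Continuous lam)
    (hlamnormal : ∀ (s : ℝ) (Cbd : ℝ) (b : ℕ → H₁ →L[ℂ] H₁) (blim : H₁ →L[ℂ] H₁),
      (∀ k, ‖b k‖ ≤ Cbd) →
      (∀ x : H₁, Tendsto (fun k => b k x) atTop (nhds (blim x))) →
      ∀ y : H₂, Tendsto (fun k => (lam s (b k)) y) atTop (nhds ((lam s blim) y)))
    (y : H₂) : Continuous fun s : ℝ => lam s (B s) y := by
  rw [continuous_iff_continuousAt]
  intro s₀
  have key0 : Tendsto (fun s => lam s (B s) y - lam s₀ (B s) y) (nhds s₀) (nhds 0) := by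
    apply squeeze_zero_norm (a := fun s => ‖lam s - lam s₀‖ * (Cb * ‖y‖))
    · intro s
      have h1 : lam s (B s) y - lam s₀ (B s) y = ((lam s - lam s₀) (B s)) y := by
        simp
      rw [h1]
      calc ‖((lam s - lam s₀) (B s)) y‖ ≤ ‖(lam s - lam s₀) (B s)‖ * ‖y‖ := le_opNorm _ _
        _ ≤ (‖lam s - lam s₀‖ * ‖B s‖) * ‖y‖ :=
            mul_le_mul_of_nonneg_right (le_opNorm _ _) (norm_nonneg y)
        _ ≤ ‖lam s - lam s₀‖ * (Cb * ‖y‖) := by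
            rw [mul_assoc]
            exact mul_le_mul_of_nonneg_left
              (mul_le_mul_of_nonneg_right (hBbdd s) (norm_nonneg y)) (norm_nonneg _)
    · have h2 : Tendsto (fun s => lam s - lam s₀) (nhds s₀) (nhds (lam s₀ - lam s₀)) :=
        (hlamcont.tendsto s₀).sub tendsto_const_nhds
      rw [sub_self] at h2
      simpa using (h2.norm).mul_const (Cb * ‖y‖)
  have h3 := key0.add
    ((aux_cont B hBcont Cb hBbdd (lam s₀) (hlamnormal s₀) y).tendsto s₀)
  rw [ContinuousAt]
  simpa using h3

lemma aux_sum_shift {M : Type*} [AddCommMonoid M] (f : ℕ → M) (m : ℕ) :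
    ∑ l ∈ Finset.Icc 1 m, f l = ∑ k ∈ Finset.range m, f (k + 1) := by
  induction m with
  | zero => simp
  | succ n ih => rw [Finset.sum_Icc_succ_top (by omega), ih, Finset.sum_range_succ]

set_option maxHeartbeats 1000000 in

/-- Let `s ↦ B(s)` be a strongly continuous, uniformly bounded map
from `[0,t]` into the bounded operators on a Hilbert space `H₁`, whose strong
operator integrals `∫₀^r B(s) ds` (encoded by the operators `Iop r r'` with
`Iop r r' x = ∫_r^{r'} B(s)x ds`) lie in a norm-closed *-subalgebra `S₁ ⊆ B(H₁)`
for all `r ∈ [0,t]`.  Let `s ↦ λ(s)` be a norm-continuous map into the bounded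
linear maps `B(H₁) → B(H₂)` such that each `λ(s)` is normal (continuous from the
strong operator topology on bounded sets into the strong operator topology) and
`λ(s)(S₁) ⊆ S₂` for a norm-closed *-subalgebra `S₂ ⊆ B(H₂)`.  Then the strong
operator integral `J = ∫₀^t λ(s)(B(s)) ds` lies in `S₂` and is the norm limit of
the Riemann-type sums `Σ_{l=1}^m λ(lt/m)(∫_{(l−1)t/m}^{lt/m} B(s) ds)`. -/
theorem normal_map_integral_in_algebra {H₁ H₂ : Type*}
    [NormedAddCommGroup H₁] [InnerProductSpace ℂ H₁] [CompleteSpace H₁]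
    [NormedAddCommGroup H₂] [InnerProductSpace ℂ H₂] [CompleteSpace H₂]
    (S₁ : StarSubalgebra ℂ (H₁ →L[ℂ] H₁)) (hS₁ : IsClosed (S₁ : Set (H₁ →L[ℂ] H₁)))
    (S₂ : StarSubalgebra ℂ (H₂ →L[ℂ] H₂)) (hS₂ : IsClosed (S₂ : Set (H₂ →L[ℂ] H₂)))
    (t : ℝ) (ht : 0 ≤ t)
    (B : ℝ → H₁ →L[ℂ] H₁)
    (hBcont : ∀ x : H₁, Continuous fun s : ℝ => B s x)
    (Cb : ℝ) (hBbdd : ∀ s : ℝ, ‖B s‖ ≤ Cb)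
    (Iop : ℝ → ℝ → (H₁ →L[ℂ] H₁))
    (hIop : ∀ (r r' : ℝ) (x : H₁), Iop r r' x = ∫ s in r..r', B s x)
    (hImem : ∀ r ∈ Set.Icc (0:ℝ) t, Iop 0 r ∈ S₁)
    (lam : ℝ → (H₁ →L[ℂ] H₁) →L[ℂ] (H₂ →L[ℂ] H₂))
    (hlamcont : Continuous lam)
    (hlamnormal : ∀ (s : ℝ) (Cbd : ℝ) (b : ℕ → H₁ →L[ℂ] H₁) (blim : H₁ →L[ℂ] H₁),
      (∀ k, ‖b k‖ ≤ Cbd) →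
      (∀ x : H₁, Tendsto (fun k => b k x) atTop (nhds (blim x))) →
      ∀ y : H₂, Tendsto (fun k => (lam s (b k)) y) atTop (nhds ((lam s blim) y)))
    (hlammem : ∀ s : ℝ, ∀ a ∈ S₁, lam s a ∈ S₂)
    (J : H₂ →L[ℂ] H₂)
    (hJ : ∀ y : H₂, J y = ∫ s in (0:ℝ)..t, (lam s (B s)) y) :
    J ∈ S₂ ∧
    Tendsto (fun m : ℕ =>
        ∑ l ∈ Finset.Icc 1 m,
          lam ((l : ℝ) * t / m) (Iop (((l : ℝ) - 1) * t / m) ((l : ℝ) * t / m)))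
      atTop (nhds J) := by
  have hCb0 : (0:ℝ) ≤ Cb := le_trans (norm_nonneg _) (hBbdd 0)
  have hInt : ∀ (x : H₁) (u v : ℝ), IntervalIntegrable (fun s => B s x) volume u v :=
    fun x u v => (hBcont x).intervalIntegrable u v
  have hadd : ∀ u v w : ℝ, Iop u w = Iop u v + Iop v w := by
    intro u v w
    ext x
    rw [ContinuousLinearMap.add_apply, hIop, hIop, hIop,
      integral_add_adjacent_intervals (hInt x u v) (hInt x v w)]
  have hcont2 : ∀ y : H₂, Continuous fun s : ℝ => lam s (B s) y :=
    aux_cont2 B hBcont Cb hBbdd lam hlamcont hlamnormal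
  have hmemS : ∀ m : ℕ, (∑ l ∈ Finset.Icc 1 m,
      lam ((l : ℝ) * t / m) (Iop (((l : ℝ) - 1) * t / m) ((l : ℝ) * t / m))) ∈ S₂ := by
    intro m
    apply sum_mem
    intro l hl
    obtain ⟨hl1, hlm⟩ := Finset.mem_Icc.mp hl
    have hm0 : (0:ℝ) < m := by
      have : 0 < m := by omega
      exact_mod_cast this
    have hl1' : (1:ℝ) ≤ l := by exact_mod_cast hl1
    have hlm' : (l:ℝ) ≤ m := by exact_mod_cast hlm
    have h1 : ((l:ℝ) - 1) * t / m ∈ Set.Icc (0:ℝ) t := by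
      constructor
      · apply div_nonneg (mul_nonneg (by linarith) ht) hm0.le
      · rw [div_le_iff₀ hm0]; nlinarith
    have h2 : (l:ℝ) * t / m ∈ Set.Icc (0:ℝ) t := by
      constructor
      · apply div_nonneg (mul_nonneg (by linarith) ht) hm0.le
      · rw [div_le_iff₀ hm0]; nlinarith
    have h3 : Iop (((l:ℝ) - 1) * t / m) ((l:ℝ) * t / m)
        = Iop 0 ((l:ℝ) * t / m) - Iop 0 (((l:ℝ) - 1) * t / m) := by
      rw [hadd 0 (((l:ℝ) - 1) * t / m) ((l:ℝ) * t / m)]; abel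
    rw [h3]
    exact hlammem _ _ (sub_mem (hImem _ h2) (hImem _ h1))
  have htend : Tendsto (fun m : ℕ =>
      ∑ l ∈ Finset.Icc 1 m,
        lam ((l : ℝ) * t / m) (Iop (((l : ℝ) - 1) * t / m) ((l : ℝ) * t / m)))
      atTop (nhds J) := by
    rw [Metric.tendsto_atTop]
    intro ε' hε'
    have hden : (0:ℝ) < Cb * t + 1 := by nlinarith
    set ε := ε' / (Cb * t + 1) with hε
    have hεpos : 0 < ε := div_pos hε' hden
    have UC := (isCompact_Icc (a := (0:ℝ)) (b := t)).uniformContinuousOn_of_continuous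
      hlamcont.continuousOn
    obtain ⟨δ, hδpos, hδ⟩ := Metric.uniformContinuousOn_iff.mp UC ε hεpos
    obtain ⟨N, hN⟩ := exists_nat_gt (t / δ)
    refine ⟨max N 1, fun m hm => ?_⟩
    have hm1 : 1 ≤ m := le_trans (le_max_right N 1) hm
    have hmN : N ≤ m := le_trans (le_max_left N 1) hm
    have hm0 : (0:ℝ) < m := by exact_mod_cast hm1
    have hstep : t / m < δ := by
      rcases eq_or_lt_of_le ht with h | h
      · rw [← h]; simpa using hδpos
      · have hN0 : (0:ℝ) < N := lt_trans (div_pos h hδpos) hN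
        have hNm : (N:ℝ) ≤ m := by exact_mod_cast hmN
        have h4 : t < (N:ℝ) * δ := by
          have := (div_lt_iff₀ hδpos).mp hN
          linarith [mul_comm (N:ℝ) δ]
        calc t / m ≤ t / N := by gcongr
          _ < δ := by rw [div_lt_iff₀ hN0]; linarith [mul_comm δ (N:ℝ)]
    have hb : ∀ y : H₂,
        ‖(∑ l ∈ Finset.Icc 1 m,
          lam ((l : ℝ) * t / m) (Iop (((l : ℝ) - 1) * t / m) ((l : ℝ) * t / m))) y - J y‖
          ≤ ε * (Cb * t) * ‖y‖ := by
      intro y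
      have hadj : (∑ k ∈ Finset.range m,
          ∫ s in ((k:ℝ) * t / m)..((((k+1):ℕ):ℝ) * t / m), lam s (B s) y)
          = ∫ s in (((0:ℕ):ℝ) * t / m)..(((m:ℕ):ℝ) * t / m), lam s (B s) y :=
        intervalIntegral.sum_integral_adjacent_intervals
          (fun k _ => (hcont2 y).intervalIntegrable _ _)
      rw [show ((0:ℕ):ℝ) * t / m = 0 by norm_num,
        show ((m:ℕ):ℝ) * t / m = t by field_simp] at hadj
      have hJy : J y = ∑ k ∈ Finset.range m,
          ∫ s in ((k:ℝ) * t / m)..((((k+1):ℕ):ℝ) * t / m), lam s (B s) y :=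
        (hJ y).trans hadj.symm
      have hSy : (∑ l ∈ Finset.Icc 1 m,
          lam ((l : ℝ) * t / m) (Iop (((l : ℝ) - 1) * t / m) ((l : ℝ) * t / m))) y
          = ∑ k ∈ Finset.range m,
          ∫ s in ((k:ℝ) * t / m)..((((k+1):ℕ):ℝ) * t / m),
            lam ((((k+1):ℕ):ℝ) * t / m) (B s) y := by
        rw [ContinuousLinearMap.sum_apply,
          aux_sum_shift (f := fun l =>
            lam ((l : ℝ) * t / m) (Iop (((l : ℝ) - 1) * t / m) ((l : ℝ) * t / m)) y) m]
        refine Finset.sum_congr rfl (fun k _ => ?_)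
        rw [show ((((k+1):ℕ):ℝ) - 1) * t / m = (k:ℝ) * t / m by push_cast; ring]
        exact aux_swap B hBcont Cb hBbdd Iop hIop (lam _) (hlamnormal _) _ _ y
      rw [hSy, hJy, ← Finset.sum_sub_distrib]
      have hterm : ∀ k ∈ Finset.range m,
          ‖(∫ s in ((k:ℝ) * t / m)..((((k+1):ℕ):ℝ) * t / m),
              lam ((((k+1):ℕ):ℝ) * t / m) (B s) y)
            - ∫ s in ((k:ℝ) * t / m)..((((k+1):ℕ):ℝ) * t / m), lam s (B s) y‖
          ≤ ε * (Cb * ‖y‖) * (t / m) := by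
        intro k hk
        have hkm : k + 1 ≤ m := Finset.mem_range.mp hk
        have hkm' : ((k:ℝ) + 1) ≤ m := by exact_mod_cast hkm
        have hk0 : (0:ℝ) ≤ k := Nat.cast_nonneg k
        have hcast : ((((k+1):ℕ)):ℝ) = (k:ℝ) + 1 := by push_cast; ring
        rw [← intervalIntegral.integral_sub
          ((aux_cont B hBcont Cb hBbdd (lam _) (hlamnormal _) y).intervalIntegrable _ _)
          ((hcont2 y).intervalIntegrable _ _)]
        have hba : |(((k+1):ℕ):ℝ) * t / m - (k:ℝ) * t / m| = t / m := by
          rw [hcast, show ((k:ℝ)+1)*t/↑m - (k:ℝ)*t/↑m = t/↑m by ring,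
            abs_of_nonneg (by positivity)]
        have := intervalIntegral.norm_integral_le_of_norm_le_const
          (a := (k:ℝ) * t / m) (b := (((k+1):ℕ):ℝ) * t / m)
          (C := ε * (Cb * ‖y‖))
          (f := fun s => lam ((((k+1):ℕ):ℝ) * t / m) (B s) y - lam s (B s) y)
          ?_
        · rw [hba] at this; exact this
        · intro s hs
          rw [Set.uIoc_of_le (by rw [hcast]; gcongr; linarith)] at hs
          obtain ⟨hs1, hs2⟩ := hs
          have hs0 : 0 ≤ s := le_trans (by positivity) hs1.le
          have hst : s ≤ t := by
            refine le_trans hs2 ?_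
            rw [hcast, div_le_iff₀ hm0]
            nlinarith
          have hτ : (((k+1):ℕ):ℝ) * t / m ∈ Set.Icc (0:ℝ) t := by
            constructor
            · rw [hcast]; positivity
            · rw [hcast, div_le_iff₀ hm0]; nlinarith
          have hdist : dist s ((((k+1):ℕ):ℝ) * t / m) < δ := by
            rw [Real.dist_eq, abs_of_nonpos (by linarith), neg_sub]
            have h6 : (((k+1):ℕ):ℝ) * t / m - (k:ℝ) * t / m = t / m := by
              rw [hcast]; ring
            calc (((k+1):ℕ):ℝ) * t / m - s ≤ (((k+1):ℕ):ℝ) * t / m - (k:ℝ) * t / m := by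
                  linarith
              _ = t / m := h6
              _ < δ := hstep
          have hε2 : ‖lam ((((k+1):ℕ):ℝ) * t / m) - lam s‖ < ε := by
            have := hδ _ hτ s ⟨hs0, hst⟩ (by rw [dist_comm]; exact hdist)
            rwa [dist_eq_norm] at this
          calc ‖lam ((((k+1):ℕ):ℝ) * t / m) (B s) y - lam s (B s) y‖
              = ‖((lam ((((k+1):ℕ):ℝ) * t / m) - lam s) (B s)) y‖ := by simp
            _ ≤ ‖(lam ((((k+1):ℕ):ℝ) * t / m) - lam s) (B s)‖ * ‖y‖ := le_opNorm _ _
            _ ≤ (‖lam ((((k+1):ℕ):ℝ) * t / m) - lam s‖ * ‖B s‖) * ‖y‖ :=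
                mul_le_mul_of_nonneg_right (le_opNorm _ _) (norm_nonneg y)
            _ ≤ ε * (Cb * ‖y‖) := by
                rw [mul_assoc]
                apply mul_le_mul hε2.le
                  (mul_le_mul_of_nonneg_right (hBbdd s) (norm_nonneg y))
                  (by positivity) hεpos.le
      calc ‖∑ k ∈ Finset.range m,
            ((∫ s in ((k:ℝ) * t / m)..((((k+1):ℕ):ℝ) * t / m),
              lam ((((k+1):ℕ):ℝ) * t / m) (B s) y)
            - ∫ s in ((k:ℝ) * t / m)..((((k+1):ℕ):ℝ) * t / m), lam s (B s) y)‖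
          ≤ ∑ k ∈ Finset.range m, ε * (Cb * ‖y‖) * (t / m) :=
            le_trans (norm_sum_le _ _) (Finset.sum_le_sum hterm)
        _ = ε * (Cb * t) * ‖y‖ := by
            rw [Finset.sum_const, Finset.card_range, nsmul_eq_mul]
            field_simp
    have hnorm : ‖(∑ l ∈ Finset.Icc 1 m,
        lam ((l : ℝ) * t / m) (Iop (((l : ℝ) - 1) * t / m) ((l : ℝ) * t / m))) - J‖
        ≤ ε * (Cb * t) :=
      ContinuousLinearMap.opNorm_le_bound _ (by positivity)
        (fun y => by rw [ContinuousLinearMap.sub_apply]; exact hb y)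
    rw [dist_eq_norm]
    calc ‖(∑ l ∈ Finset.Icc 1 m,
        lam ((l : ℝ) * t / m) (Iop (((l : ℝ) - 1) * t / m) ((l : ℝ) * t / m))) - J‖
        ≤ ε * (Cb * t) := hnorm
      _ < ε' := by
          rw [hε, div_mul_eq_mul_div, div_lt_iff₀ hden]
          nlinarith [mul_nonneg hCb0 ht]
  exact ⟨hS₂.mem_of_tendsto htend (Eventually.of_forall hmemS), htend⟩
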